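/- Let k be a positive integer and w₁,…,w_k > 0 real numbers. Set w = ∏_{i=1}^k w_i and T = √w·(w − 1). Then for every subset P ⊆ {1,…,k}: w·∏_{i∈P} w_i − ∏_{i∈{1,…,k}∖P} w_i = T if and only if ∏_{i∈P} w_i = ∏_{i∈{1,…,k}∖P} w_i. -/

import Mathlib

open Finset

/-- Case 1 of the reduction from #PARTITION to #T-PARTITION (Lemma 4.8 of
Murtagh–Vadhan): with `w = ∏ w_i` and `T = √w·(w − 1)`, for every subset `P`
we have `w·∏_{i∈P} w_i − ∏_{i∉P} w_i = T` iff `∏_{i∈P} w_i = ∏_{i∉P} w_i`. -/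
theorem partition_gap_iff (k : ℕ) (hk : 0 < k) (w : Fin k → ℝ) (hw : ∀ i, 0 < w i) :
    ∀ P : Finset (Fin k),
      ((∏ i, w i) * ∏ i ∈ P, w i - ∏ i ∈ Pᶜ, w i
          = Real.sqrt (∏ i, w i) * ((∏ i, w i) - 1)
        ↔ ∏ i ∈ P, w i = ∏ i ∈ Pᶜ, w i) := by
  intro P
  set a := ∏ i ∈ P, w i with ha
  set b := ∏ i ∈ Pᶜ, w i with hb
  have ha0 : 0 < a := Finset.prod_pos fun i _ => hw i
  have hb0 : 0 < b := Finset.prod_pos fun i _ => hw i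
  have huniv : ∏ i, w i = a * b := (Finset.prod_mul_prod_compl P w).symm
  rw [huniv]
  set s := Real.sqrt (a * b) with hs
  have hs0 : 0 < s := Real.sqrt_pos.mpr (mul_pos ha0 hb0)
  have hs2 : s * s = a * b := Real.mul_self_sqrt (mul_pos ha0 hb0).le
  constructor
  · intro h
    have key : (a - s) * (a ^ 2 * b + s) = 0 := by nlinarith [h, hs2]
    have has : a = s := by
      rcases mul_eq_zero.mp key with h1 | h1
      · linarith [sub_eq_zero.mp h1]
      · nlinarith
    rw [← has] at hs2
    exact mul_left_cancel₀ ha0.ne' hs2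
  · intro h
    have : s = a := by
      rw [hs, ← h, Real.sqrt_mul_self ha0.le]
    rw [this, ← h]; ring
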